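/- Let F = {x ∈ ℝⁿ : ⟨d,x⟩ ≤ γ} be a closed halfspace with ‖d‖ = 1. Then for any integers τ > σ ≥ 1 there exist finite sets S ⊂ T ⊂ ℝⁿ with |S| = σ and |T| = τ such that V_T(S) = F. -/

import Mathlib

open Finset Metric
open scoped Classical

/-- The multipoint (higher-order) Voronoi cell of `S` within the set of sites `T`. -/
def vcell {n : ℕ} (T S : Finset (EuclideanSpace ℝ (Fin n))) :
    Set (EuclideanSpace ℝ (Fin n)) :=
  {x | ∀ s ∈ S, ∀ t ∈ T \ S, dist x s ≤ dist x t}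

lemma key_dist {n : ℕ} (d : EuclideanSpace ℝ (Fin n)) (hd : ‖d‖ = 1)
    (x : EuclideanSpace ℝ (Fin n)) (c₁ c₂ : ℝ) (h : c₁ < c₂) :
    dist x (c₁ • d) ≤ dist x (c₂ • d) ↔ (inner ℝ d x : ℝ) ≤ (c₁ + c₂) / 2 := by
  rw [← pow_le_pow_iff_left₀ dist_nonneg dist_nonneg two_ne_zero]
  rw [dist_eq_norm, dist_eq_norm, norm_sub_sq_real, norm_sub_sq_real,
    real_inner_smul_right, real_inner_smul_right, norm_smul, norm_smul, hd]
  rw [real_inner_comm x d]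
  simp only [mul_one, mul_pow, Real.norm_eq_abs, sq_abs]
  constructor
  · intro hx
    by_contra hq
    push_neg at hq
    nlinarith [mul_pos (sub_pos.2 h) (sub_pos.2 hq)]
  · intro hx
    nlinarith [mul_nonneg (sub_pos.2 h).le (sub_nonneg.2 hx)]

theorem stmt_19 {n : ℕ} (d : EuclideanSpace ℝ (Fin n)) (hd : ‖d‖ = 1)
    (γ : ℝ) (σ τ : ℕ) (hσ : 1 ≤ σ) (hστ : σ < τ) :
    ∃ S T : Finset (EuclideanSpace ℝ (Fin n)),
      S ⊂ T ∧ S.card = σ ∧ T.card = τ ∧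
      vcell T S = {x : EuclideanSpace ℝ (Fin n) | inner ℝ d x ≤ γ} := by
  have hd0 : d ≠ 0 := by
    intro h; rw [h, norm_zero] at hd; norm_num at hd
  have hinj : Function.Injective (fun c : ℝ => c • d) := smul_left_injective ℝ hd0
  set f : ℕ → EuclideanSpace ℝ (Fin n) := fun k => (γ - ((k : ℝ) + 1)) • d with hf_def
  set g : ℕ → EuclideanSpace ℝ (Fin n) := fun k => (γ + ((σ : ℝ) + k)) • d with hg_def
  have hf : Function.Injective f := by
    intro a b h
    have := hinj h
    have : γ - ((a : ℝ) + 1) = γ - ((b : ℝ) + 1) := this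
    have : (a : ℝ) = b := by linarith
    exact_mod_cast this
  have hg : Function.Injective g := by
    intro a b h
    have := hinj h
    have : γ + ((σ : ℝ) + a) = γ + ((σ : ℝ) + b) := this
    have : (a : ℝ) = b := by linarith
    exact_mod_cast this
  have hfg : ∀ a b, f a ≠ g b := by
    intro a b h
    have := hinj h
    have : γ - ((a : ℝ) + 1) = γ + ((σ : ℝ) + b) := this
    have ha : (0 : ℝ) ≤ a := Nat.cast_nonneg a
    have hb : (0 : ℝ) ≤ b := Nat.cast_nonneg b
    have hs : (1 : ℝ) ≤ σ := by exact_mod_cast hσ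
    linarith
  set S : Finset (EuclideanSpace ℝ (Fin n)) := (range σ).image f with hS_def
  set B : Finset (EuclideanSpace ℝ (Fin n)) := (range (τ - σ)).image g with hB_def
  set T : Finset (EuclideanSpace ℝ (Fin n)) := S ∪ B with hT_def
  have hdisj : Disjoint S B := by
    rw [Finset.disjoint_left]
    intro a haS haB
    simp only [hS_def, hB_def, mem_image, mem_range] at haS haB
    obtain ⟨k, _, hk⟩ := haS
    obtain ⟨j, _, hj⟩ := haB
    exact hfg k j (hk.trans hj.symm)
  have hTS : T \ S = B := by
    rw [hT_def, Finset.union_sdiff_cancel_left hdisj]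
  have hScard : S.card = σ := by
    rw [hS_def, Finset.card_image_of_injective _ hf, card_range]
  have hBcard : B.card = τ - σ := by
    rw [hB_def, Finset.card_image_of_injective _ hg, card_range]
  have hTcard : T.card = τ := by
    rw [hT_def, Finset.card_union_of_disjoint hdisj, hScard, hBcard]
    omega
  refine ⟨S, T, ?_, hScard, hTcard, ?_⟩
  · refine Finset.ssubset_iff_subset_ne.mpr ⟨Finset.subset_union_left, ?_⟩
    intro h
    rw [h] at hScard
    omega
  · ext x
    simp only [vcell, Set.mem_setOf_eq]
    constructor
    · intro hx
      have hs : f (σ - 1) ∈ S := by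
        simp only [hS_def, mem_image, mem_range]
        exact ⟨σ - 1, by omega, rfl⟩
      have ht : g 0 ∈ T \ S := by
        rw [hTS]
        simp only [hB_def, mem_image, mem_range]
        exact ⟨0, by omega, rfl⟩
      have hkey := hx _ hs _ ht
      have hcast : ((σ - 1 : ℕ) : ℝ) + 1 = σ := by
        have : ((σ - 1 : ℕ) : ℝ) = (σ : ℝ) - 1 := by
          rw [Nat.cast_sub hσ]; norm_num
        rw [this]; ring
      have hs1 : (1 : ℝ) ≤ σ := by exact_mod_cast hσ
      have hlt : γ - (((σ - 1 : ℕ) : ℝ) + 1) < γ + ((σ : ℝ) + (0 : ℕ)) := by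
        push_cast
        rw [hcast]
        linarith
      have := (key_dist d hd x _ _ hlt).mp hkey
      rw [hcast] at this
      push_cast at this
      linarith
    · intro hx s hs t ht
      rw [hTS] at ht
      simp only [hS_def, hB_def, mem_image, mem_range] at hs ht
      obtain ⟨k, hk, rfl⟩ := hs
      obtain ⟨j, hj, rfl⟩ := ht
      have hk1 : (k : ℝ) + 1 ≤ σ := by exact_mod_cast hk
      have hj0 : (0 : ℝ) ≤ j := Nat.cast_nonneg j
      have hlt : γ - ((k : ℝ) + 1) < γ + ((σ : ℝ) + j) := by linarith
      exact (key_dist d hd x _ _ hlt).mpr (by linarith)
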